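/- Let $V$ be a finite-dimensional complex inner-product space with orthogonal decomposition $V = \bigoplus_{i=1}^{d} V_i$. For $1 \le j < k \le d$, let $f_{jk} : V_j \otimes V_k \to \wedge^2 V$ be the isometric embedding determined by $x \otimes y \mapsto x \wedge y$ for $x \in V_j$, $y \in V_k$. Suppose $X_i \subset \wedge^2 V_i$ is an FUPB in $\wedge^2 V_i$ for each $i$, and $Y_{jk} \subset V_j \otimes V_k$ is a UPB for each $j < k$. Then the union $Z$ of all $X_i$ and all $f_{jk}(Y_{jk})$ is an FUPB in $\wedge^2 V$: $Z$ is a pairwise orthogonal set of nonzero decomposable 2-vectors, and any decomposable 2-vector $x \wedge y$ (with $x, y \in V$) orthogonal to all of $Z$ is zero. -/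

import Mathlib

open scoped InnerProductSpace

noncomputable section

/-- The `N`-fold tensor power of `ℂ^M`, realized as the Euclidean space with
orthonormal basis indexed by multi-indices `Fin N → Fin M`. -/
abbrev TensorPow (N M : ℕ) : Type := EuclideanSpace ℂ (Fin N → Fin M)

/-- The wedge (Slater determinant) of a family of `N` vectors in `ℂ^M`:
`|v 0⟩ ∧ ⋯ ∧ |v (N-1)⟩ = ∑ σ, sgn σ • |v σ(0), …, v σ(N-1)⟩`. -/
def wedge {N M : ℕ} (v : Fin N → EuclideanSpace ℂ (Fin M)) : TensorPow N M :=
  WithLp.toLp 2 (fun x => ∑ σ : Equiv.Perm (Fin N), ((Equiv.Perm.sign σ : ℤ) : ℂ) * ∏ k, v (σ k) (x k))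

/-- The exterior power `⋀^N ℂ^M`, i.e. the subspace of antisymmetric tensors
in `(ℂ^M)^{⊗N}`. -/
def exteriorPow (N M : ℕ) : Submodule ℂ (TensorPow N M) where
  carrier := {ψ | ∀ σ : Equiv.Perm (Fin N), ∀ x : Fin N → Fin M,
    ψ (x ∘ σ) = ((Equiv.Perm.sign σ : ℤ) : ℂ) * ψ x}
  add_mem' := by
    intro a b ha hb σ x
    have h1 := ha σ x
    have h2 := hb σ x
    show a (x ∘ σ) + b (x ∘ σ) = ((Equiv.Perm.sign σ : ℤ) : ℂ) * (a x + b x)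
    rw [h1, h2]; ring
  zero_mem' := by
    intro σ x
    show (0 : ℂ) = ((Equiv.Perm.sign σ : ℤ) : ℂ) * (0 : ℂ)
    ring
  smul_mem' := by
    intro c a ha σ x
    have h1 := ha σ x
    show c * a (x ∘ σ) = ((Equiv.Perm.sign σ : ℤ) : ℂ) * (c * a x)
    rw [h1]; ring

/-- A decomposable (Slater determinant) vector in `⋀^N ℂ^M`. -/
def IsSlater {N M : ℕ} (ψ : TensorPow N M) : Prop :=
  ∃ v : Fin N → EuclideanSpace ℂ (Fin M), ψ = wedge v


variable {M : ℕ}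

lemma wedge_apply (a b : EuclideanSpace ℂ (Fin M)) (x : Fin 2 → Fin M) :
    wedge ![a, b] x = a (x 0) * b (x 1) - b (x 0) * a (x 1) := by
  rw [wedge, WithLp.ofLp_toLp, show (Finset.univ : Finset (Equiv.Perm (Fin 2))) = {Equiv.refl (Fin 2), Equiv.swap 0 1} from by decide]
  rw [Finset.sum_insert (by decide), Finset.sum_singleton]
  simp [Fin.prod_univ_two, Equiv.Perm.sign_swap]
  ring

lemma sum_fin_two_arrow {α : Type*} [AddCommMonoid α] (f : (Fin 2 → Fin M) → α) :
    ∑ t, f t = ∑ p : Fin M, ∑ q : Fin M, f ![p, q] := by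
  rw [← (finTwoArrowEquiv (Fin M)).symm.sum_comp f, Fintype.sum_prod_type]
  rfl

lemma inner_wedge (a b c d : EuclideanSpace ℂ (Fin M)) :
    ⟪wedge ![a, b], wedge ![c, d]⟫_ℂ =
      2 * (⟪a, c⟫_ℂ * ⟪b, d⟫_ℂ - ⟪a, d⟫_ℂ * ⟪b, c⟫_ℂ) := by
  simp only [PiLp.inner_apply, RCLike.inner_apply']
  rw [sum_fin_two_arrow (fun t => (starRingEnd ℂ) (wedge ![a,b] t) * wedge ![c,d] t)]
  set F : Fin M → Fin M → ℂ := fun p q => (starRingEnd ℂ) (a p) * c p * ((starRingEnd ℂ) (b q) * d q) with hF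
  set G : Fin M → Fin M → ℂ := fun p q => (starRingEnd ℂ) (a p) * d p * ((starRingEnd ℂ) (b q) * c q) with hG
  have step1 : ∑ p : Fin M, ∑ q : Fin M,
      (starRingEnd ℂ) (wedge ![a,b] ![p,q]) * wedge ![c,d] ![p,q]
      = ∑ p : Fin M, ∑ q : Fin M, (F p q + F q p - G p q - G q p) := by
    refine Finset.sum_congr rfl fun p _ => Finset.sum_congr rfl fun q _ => ?_
    simp only [wedge_apply, Matrix.cons_val_zero, Matrix.cons_val_one, Matrix.head_cons,
      map_sub, map_mul, hF, hG]
    ring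
  have hFc : ∑ p : Fin M, ∑ q : Fin M, F q p = ∑ p : Fin M, ∑ q : Fin M, F p q :=
    Finset.sum_comm
  have hGc : ∑ p : Fin M, ∑ q : Fin M, G q p = ∑ p : Fin M, ∑ q : Fin M, G p q :=
    Finset.sum_comm
  rw [step1]
  simp only [Finset.sum_add_distrib, Finset.sum_sub_distrib]
  rw [hFc, hGc]
  rw [Finset.sum_mul_sum Finset.univ Finset.univ (fun i => (starRingEnd ℂ) (a i) * c i) (fun j => (starRingEnd ℂ) (b j) * d j)]
  rw [Finset.sum_mul_sum Finset.univ Finset.univ (fun i => (starRingEnd ℂ) (a i) * d i) (fun j => (starRingEnd ℂ) (b j) * c j)]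
  ring

lemma wedge_apply_pair (a b : EuclideanSpace ℂ (Fin M)) (p q : Fin M) :
    wedge ![a, b] ![p, q] = a p * b q - b p * a q := by
  rw [wedge_apply]; simp

lemma wedge_eq_zero_iff (a b : EuclideanSpace ℂ (Fin M)) :
    wedge ![a, b] = 0 ↔ ∀ p q, a p * b q = b p * a q := by
  constructor
  · intro h p q
    have := congrFun (congrArg WithLp.ofLp h) ![p, q]
    rw [wedge_apply_pair] at this
    have h0 : (0 : TensorPow 2 M) ![p, q] = 0 := rfl
    rw [h0] at this
    linear_combination this
  · intro h
    ext t
    show wedge ![a, b] t = 0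
    rw [wedge_apply]
    rw [h (t 0) (t 1)]
    ring

lemma exists_smul_of_wedge_zero (a b : EuclideanSpace ℂ (Fin M))
    (h : wedge ![a, b] = 0) (ha : a ≠ 0) : ∃ c : ℂ, b = c • a := by
  rw [wedge_eq_zero_iff] at h
  have : ∃ p, a p ≠ 0 := by
    by_contra hc
    push_neg at hc
    exact ha (by ext i; simpa using hc i)
  obtain ⟨p, hp⟩ := this
  refine ⟨b p / a p, ?_⟩
  ext q
  show b q = (b p / a p) * a q
  field_simp
  linear_combination h p q

lemma euclid_sum_apply {ι : Type*} (s : Finset ι) (f : ι → EuclideanSpace ℂ (Fin M)) (t : Fin M) :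
    (∑ i ∈ s, f i) t = ∑ i ∈ s, f i t := by
  classical
  induction s using Finset.induction_on with
  | empty => rfl
  | insert _ _ h ih =>
    rw [Finset.sum_insert h, Finset.sum_insert h, ← ih]
    rfl

lemma inner_wedge_eq_zero {a b c d : EuclideanSpace ℂ (Fin M)}
    (h1 : ⟪a, c⟫_ℂ = 0 ∨ ⟪b, d⟫_ℂ = 0) (h2 : ⟪a, d⟫_ℂ = 0 ∨ ⟪b, c⟫_ℂ = 0) :
    ⟪wedge ![a, b], wedge ![c, d]⟫_ℂ = 0 := by
  rw [inner_wedge]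
  rcases h1 with h | h <;> rcases h2 with h' | h' <;> rw [h, h'] <;> ring

lemma exists_decomp {d : ℕ} (V : Fin d → Submodule ℂ (EuclideanSpace ℂ (Fin M)))
    (hsup : (⨆ i, V i) = ⊤) (x : EuclideanSpace ℂ (Fin M)) :
    ∃ u : Fin d → EuclideanSpace ℂ (Fin M), (∀ i, u i ∈ V i) ∧ x = ∑ i, u i := by
  have hx : x ∈ ⨆ i, V i := hsup ▸ Submodule.mem_top
  rw [Submodule.mem_iSup_iff_exists_finsupp] at hx
  obtain ⟨f, hf, hsum⟩ := hx
  refine ⟨fun i => f i, hf, ?_⟩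
  rw [← hsum, Finsupp.sum_fintype _ _ (fun i => rfl)]

/-- Composition of FUPBs and UPBs: if `V = ⊕ᵢ Vᵢ` is an orthogonal decomposition of
`V = ℂ^M`, each `Xᵢ` (given by the pairs `A i l`) is an FUPB in `⋀² Vᵢ`, and each
`Y_{jk}` (given by the pairs `B j k l`, `j < k`) is a UPB in `Vⱼ ⊗ Vₖ`, then the
union `Z` of the `Xᵢ` and of the wedges of the `Y_{jk}` is an FUPB in `⋀² V`. -/
theorem FUPB_from_blocks (M d : ℕ)
    (V : Fin d → Submodule ℂ (EuclideanSpace ℂ (Fin M)))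
    (horth : ∀ i j, i ≠ j → ∀ x ∈ V i, ∀ y ∈ V j, ⟪x, y⟫_ℂ = 0)
    (hsup : (⨆ i, V i) = ⊤)
    (m : Fin d → ℕ)
    (A : (i : Fin d) → Fin (m i) →
      EuclideanSpace ℂ (Fin M) × EuclideanSpace ℂ (Fin M))
    (hA1 : ∀ i l, (A i l).1 ∈ V i ∧ (A i l).2 ∈ V i)
    (hA2 : ∀ i l, wedge ![(A i l).1, (A i l).2] ≠ 0)
    (hA3 : ∀ i, ∀ l l', l ≠ l' →
      ⟪wedge ![(A i l).1, (A i l).2], wedge ![(A i l').1, (A i l').2]⟫_ℂ = 0)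
    (hA4 : ∀ i, ∀ u v, u ∈ V i → v ∈ V i →
      (∀ l, ⟪wedge ![(A i l).1, (A i l).2], wedge ![u, v]⟫_ℂ = 0) →
      wedge ![u, v] = 0)
    (n : Fin d → Fin d → ℕ)
    (B : (j k : Fin d) → Fin (n j k) →
      EuclideanSpace ℂ (Fin M) × EuclideanSpace ℂ (Fin M))
    (hB1 : ∀ j k, j < k → ∀ l, (B j k l).1 ∈ V j ∧ (B j k l).2 ∈ V k)
    (hB2 : ∀ j k, j < k → ∀ l, (B j k l).1 ≠ 0 ∧ (B j k l).2 ≠ 0)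
    (hB3 : ∀ j k, j < k → ∀ l l', l ≠ l' →
      ⟪(B j k l).1, (B j k l').1⟫_ℂ * ⟪(B j k l).2, (B j k l').2⟫_ℂ = 0)
    (hB4 : ∀ j k, j < k → ∀ x y, x ∈ V j → y ∈ V k →
      (∀ l, ⟪(B j k l).1, x⟫_ℂ * ⟪(B j k l).2, y⟫_ℂ = 0) → x = 0 ∨ y = 0) :
    (∀ φ ∈ ({φ | ∃ i l, φ = wedge ![(A i l).1, (A i l).2]} ∪
        {φ | ∃ j k, ∃ _ : j < k, ∃ l, φ = wedge ![(B j k l).1, (B j k l).2]} :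
        Set (TensorPow 2 M)),
      IsSlater φ ∧ φ ≠ 0) ∧
    (∀ φ ∈ ({φ | ∃ i l, φ = wedge ![(A i l).1, (A i l).2]} ∪
        {φ | ∃ j k, ∃ _ : j < k, ∃ l, φ = wedge ![(B j k l).1, (B j k l).2]} :
        Set (TensorPow 2 M)),
      ∀ φ' ∈ ({φ | ∃ i l, φ = wedge ![(A i l).1, (A i l).2]} ∪
        {φ | ∃ j k, ∃ _ : j < k, ∃ l, φ = wedge ![(B j k l).1, (B j k l).2]} :
        Set (TensorPow 2 M)),
      φ ≠ φ' → ⟪φ, φ'⟫_ℂ = 0) ∧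
    (∀ x y : EuclideanSpace ℂ (Fin M),
      (∀ φ ∈ ({φ | ∃ i l, φ = wedge ![(A i l).1, (A i l).2]} ∪
        {φ | ∃ j k, ∃ _ : j < k, ∃ l, φ = wedge ![(B j k l).1, (B j k l).2]} :
        Set (TensorPow 2 M)),
        ⟪φ, wedge ![x, y]⟫_ℂ = 0) →
      wedge ![x, y] = 0) := by
  have hz : ∀ (i1 i2 : Fin d) (p q : EuclideanSpace ℂ (Fin M)), i1 ≠ i2 →
      p ∈ V i1 → q ∈ V i2 → ⟪p, q⟫_ℂ = 0 :=
    fun i1 i2 p q h hp hq => horth i1 i2 h p hp q hq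
  refine ⟨?_, ?_, ?_⟩
  · rintro φ (⟨i, l, rfl⟩ | ⟨j, k, hjk, l, rfl⟩)
    · exact ⟨⟨_, rfl⟩, hA2 i l⟩
    · refine ⟨⟨_, rfl⟩, fun h0 => ?_⟩
      have hi : ⟪wedge ![(B j k l).1, (B j k l).2], wedge ![(B j k l).1, (B j k l).2]⟫_ℂ = 0 := by
        rw [h0]; simp
      rw [inner_wedge, hz j k _ _ hjk.ne (hB1 j k hjk l).1 (hB1 j k hjk l).2] at hi
      have h1 : ⟪(B j k l).1, (B j k l).1⟫_ℂ ≠ 0 := by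
        rw [inner_self_ne_zero]; exact (hB2 j k hjk l).1
      have h2 : ⟪(B j k l).2, (B j k l).2⟫_ℂ ≠ 0 := by
        rw [inner_self_ne_zero]; exact (hB2 j k hjk l).2
      apply h1
      apply (mul_ne_zero_iff.mpr ⟨h1, h2⟩ _).elim
      linear_combination hi / 2
  · rintro φ (⟨i, l, rfl⟩ | ⟨j, k, hjk, l, rfl⟩) φ'
      (⟨i', l', rfl⟩ | ⟨j', k', hj'k', l', rfl⟩) hne
    · by_cases hii : i = i'
      · subst hii
        by_cases hll : l = l'
        · exact absurd (by rw [hll]) hne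
        · exact hA3 i l l' hll
      · exact inner_wedge_eq_zero
          (Or.inl (hz i i' _ _ hii (hA1 i l).1 (hA1 i' l').1))
          (Or.inl (hz i i' _ _ hii (hA1 i l).1 (hA1 i' l').2))
    · refine inner_wedge_eq_zero ?_ ?_
      · by_cases h : i = j'
        · exact Or.inr (hz i k' _ _ (h ▸ hj'k'.ne) (hA1 i l).2 (hB1 j' k' hj'k' l').2)
        · exact Or.inl (hz i j' _ _ h (hA1 i l).1 (hB1 j' k' hj'k' l').1)
      · by_cases h : i = k'
        · exact Or.inr (hz i j' _ _ (h ▸ hj'k'.ne') (hA1 i l).2 (hB1 j' k' hj'k' l').1)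
        · exact Or.inl (hz i k' _ _ h (hA1 i l).1 (hB1 j' k' hj'k' l').2)
    · refine inner_wedge_eq_zero ?_ ?_
      · by_cases h : j = i'
        · exact Or.inr (hz k i' _ _ (h ▸ hjk.ne') (hB1 j k hjk l).2 (hA1 i' l').2)
        · exact Or.inl (hz j i' _ _ h (hB1 j k hjk l).1 (hA1 i' l').1)
      · by_cases h : j = i'
        · exact Or.inr (hz k i' _ _ (h ▸ hjk.ne') (hB1 j k hjk l).2 (hA1 i' l').1)
        · exact Or.inl (hz j i' _ _ h (hB1 j k hjk l).1 (hA1 i' l').2)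
    · by_cases hjj : j = j'
      · subst hjj
        by_cases hkk : k = k'
        · subst hkk
          by_cases hll : l = l'
          · exact absurd (by rw [hll]) hne
          · rw [inner_wedge,
              hz j k _ _ hjk.ne (hB1 j k hjk l).1 (hB1 j k hj'k' l').2]
            linear_combination 2 * hB3 j k hjk l l' hll
        · exact inner_wedge_eq_zero
            (Or.inr (hz k k' _ _ hkk (hB1 j k hjk l).2 (hB1 j k' hj'k' l').2))
            (by by_cases h : j = k'
                · exact Or.inr (hz k j _ _ (fun he => hjk.ne' he) (hB1 j k hjk l).2 (hB1 j k' hj'k' l').1)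
                · exact Or.inl (hz j k' _ _ h (hB1 j k hjk l).1 (hB1 j k' hj'k' l').2))
      · refine inner_wedge_eq_zero
          (Or.inl (hz j j' _ _ hjj (hB1 j k hjk l).1 (hB1 j' k' hj'k' l').1)) ?_
        by_cases h : j = k'
        · have hkj' : k ≠ j' := by
            intro he
            subst he
            subst h
            exact absurd hj'k' (lt_asymm hjk)
          exact Or.inr (hz k j' _ _ hkj' (hB1 j k hjk l).2 (hB1 j' k' hj'k' l').1)
        · exact Or.inl (hz j k' _ _ h (hB1 j k hjk l).1 (hB1 j' k' hj'k' l').2)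
  · intro x y hxy
    obtain ⟨u, huV, hux⟩ := exists_decomp V hsup x
    obtain ⟨v, hvV, hvy⟩ := exists_decomp V hsup y
    have key : ∀ (i : Fin d) (a : EuclideanSpace ℂ (Fin M)), a ∈ V i →
        ∀ (ww : Fin d → EuclideanSpace ℂ (Fin M)), (∀ j, ww j ∈ V j) →
        ⟪a, ∑ j, ww j⟫_ℂ = ⟪a, ww i⟫_ℂ := by
      intro i a ha ww hww
      rw [inner_sum]
      exact Finset.sum_eq_single i
        (fun j _ hji => hz i j _ _ (Ne.symm hji) ha (hww j))
        (fun h => absurd (Finset.mem_univ i) h)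
    have hAzero : ∀ i, wedge ![u i, v i] = 0 := by
      intro i
      refine hA4 i (u i) (v i) (huV i) (hvV i) fun l => ?_
      have h0 := hxy _ (Set.mem_union_left _ ⟨i, l, rfl⟩)
      rw [inner_wedge, hux, hvy,
        key i _ (hA1 i l).1 u huV, key i _ (hA1 i l).1 v hvV,
        key i _ (hA1 i l).2 u huV, key i _ (hA1 i l).2 v hvV] at h0
      rw [inner_wedge]
      exact h0
    have hdep : ∀ i, ∃ (α β : ℂ) (ww : EuclideanSpace ℂ (Fin M)),
        ww ∈ V i ∧ u i = α • ww ∧ v i = β • ww := by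
      intro i
      by_cases h : u i = 0
      · exact ⟨0, 1, v i, hvV i, by simp [h], by simp⟩
      · obtain ⟨c, hc⟩ := exists_smul_of_wedge_zero _ _ (hAzero i) h
        exact ⟨1, c, u i, huV i, by simp, hc⟩
    choose α β w hwV hαw hβw using hdep
    have hcross : ∀ j k, j < k →
        ((α j * β k - β j * α k) • w j = 0 ∨ w k = 0) := by
      intro j k hjk
      refine hB4 j k hjk _ _ (Submodule.smul_mem _ _ (hwV j)) (hwV k) fun l => ?_
      have h0 := hxy _ (Set.mem_union_right _ ⟨j, k, hjk, l, rfl⟩)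
      rw [inner_wedge, hux, hvy,
        key j _ (hB1 j k hjk l).1 u huV, key j _ (hB1 j k hjk l).1 v hvV,
        key k _ (hB1 j k hjk l).2 u huV, key k _ (hB1 j k hjk l).2 v hvV,
        hαw j, hβw k, hβw j, hαw k,
        inner_smul_right, inner_smul_right, inner_smul_right, inner_smul_right] at h0
      rw [inner_smul_right]
      linear_combination h0 / 2
    ext t
    show wedge ![x, y] t = 0
    rw [wedge_apply]
    have happ : ∀ (z : Fin d → EuclideanSpace ℂ (Fin M)) (γ : Fin d → ℂ)
        (hzγ : ∀ i, z i = γ i • w i) (s : Fin M),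
        (∑ i, z i) s = ∑ i, γ i * w i s := by
      intro z γ hzγ s
      rw [euclid_sum_apply]
      refine Finset.sum_congr rfl fun i _ => ?_
      rw [hzγ i]
      rfl
    rw [hux, hvy, happ u α hαw (t 0), happ u α hαw (t 1),
      happ v β hβw (t 0), happ v β hβw (t 1)]
    rw [Finset.sum_mul_sum Finset.univ Finset.univ (fun j => α j * w j (t 0)) (fun k => β k * w k (t 1))]
    rw [Finset.sum_mul_sum Finset.univ Finset.univ (fun j => β j * w j (t 0)) (fun k => α k * w k (t 1))]
    rw [← Finset.sum_sub_distrib]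
    refine Finset.sum_eq_zero fun j _ => ?_
    rw [← Finset.sum_sub_distrib]
    refine Finset.sum_eq_zero fun k _ => ?_
    rcases lt_trichotomy j k with h | h | h
    · rcases hcross j k h with hc | hc
      · have h2 : (α j * β k - β j * α k) * w j (t 0) = 0 := by
          have := congrFun (congrArg WithLp.ofLp hc) (t 0)
          simpa [smul_eq_mul] using this
        linear_combination (w k (t 1)) * h2
      · have h2 : w k (t 1) = 0 := by
          have := congrFun (congrArg WithLp.ofLp hc) (t 1)
          simpa using this
        rw [h2]; ring
    · subst h; ring
    · rcases hcross k j h with hc | hc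
      · have h2 : (α k * β j - β k * α j) * w k (t 1) = 0 := by
          have := congrFun (congrArg WithLp.ofLp hc) (t 1)
          simpa [smul_eq_mul] using this
        linear_combination (-(w j (t 0))) * h2
      · have h2 : w j (t 0) = 0 := by
          have := congrFun (congrArg WithLp.ofLp hc) (t 0)
          simpa using this
        rw [h2]; ring
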